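/- Let b₀ > 0, b > 0, M > 0, and let F : ℝ → ℝ be continuously differentiable with F(0) = 0, −b₀ ≤ F'(y) ≤ 0 for all y ∈ ℝ, and F(y) ≤ −b·y + M for all y ≥ 0. Let x₀ ≥ 0, let u : [0,∞) → ℝ be locally integrable with u(t) ≥ 0 for a.e. t ≥ 0, and let x : [0,∞) → ℝ be continuous with x(t) = x₀ + ∫₀^t (F(x(s)) + u(s)) ds for all t ≥ 0. Then for every t ≥ 0: e^{-b₀t}·(x₀ + ∫₀^t e^{b₀s} u(s) ds) ≤ x(t) ≤ e^{-bt}·(x₀ + ∫₀^t e^{bs}(M + u(s)) ds). In particular x(t) ≥ 0 for all t ≥ 0. -/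

import Mathlib

open MeasureTheory intervalIntegral Set

lemma traj_exp_int (c r t : ℝ) :
    ∫ s in r..t, c * Real.exp (c*s) = Real.exp (c*t) - Real.exp (c*r) := by
  have h : ∀ s : ℝ, HasDerivAt (fun y => Real.exp (c*y)) (c * Real.exp (c*s)) s := by
    intro s
    convert ((hasDerivAt_id' s).const_mul c).exp using 1; ring
  exact intervalIntegral.integral_eq_sub_of_hasDerivAt (fun s _ => h s)
    (Continuous.intervalIntegrable (by continuity) _ _)

lemma traj_mul_int (c t : ℝ) (g : ℝ → ℝ) (hg : IntegrableOn g (Set.Ioc 0 t)) :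
    IntegrableOn (fun r => Real.exp (c*r) * g r) (Set.Ioc 0 t) := by
  refine Integrable.mono' (hg.norm.const_mul (Real.exp (|c| * t)))
    ((Real.continuous_exp.comp (continuous_const.mul continuous_id)).aestronglyMeasurable.mul
      hg.aestronglyMeasurable) ?_
  filter_upwards [ae_restrict_mem measurableSet_Ioc] with r hr
  rw [norm_mul, Real.norm_eq_abs (Real.exp _), abs_of_pos (Real.exp_pos _)]
  have h1 : c * r ≤ |c| * t := by
    calc c * r ≤ |c * r| := le_abs_self _
    _ = |c| * r := by rw [abs_mul, abs_of_pos hr.1]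
    _ ≤ |c| * t := mul_le_mul_of_nonneg_left hr.2 (abs_nonneg c)
  exact mul_le_mul_of_nonneg_right (Real.exp_le_exp.mpr h1) (norm_nonneg _)

lemma traj_fubini (c t : ℝ) (ht : 0 ≤ t) (g : ℝ → ℝ)
    (hg : IntegrableOn g (Set.Ioc 0 t)) :
    ∫ s in (0:ℝ)..t, c * Real.exp (c*s) * (∫ r in (0:ℝ)..s, g r)
      = Real.exp (c*t) * (∫ r in (0:ℝ)..t, g r) - ∫ r in (0:ℝ)..t, Real.exp (c*r) * g r := by
  set μt := volume.restrict (Set.Ioc (0:ℝ) t) with hμt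
  haveI : IsFiniteMeasure μt := ⟨by
    rw [hμt, Measure.restrict_apply_univ]; exact measure_Ioc_lt_top⟩
  set f : ℝ × ℝ → ℝ := fun p => if p.2 ≤ p.1 then c * Real.exp (c * p.1) * g p.2 else 0 with hf
  have hfind : f = Set.indicator {p : ℝ × ℝ | p.2 ≤ p.1}
      (fun p => c * Real.exp (c * p.1) * g p.2) := by
    funext p; by_cases h : p.2 ≤ p.1 <;> simp [hf, Set.indicator, h]
  have hset : MeasurableSet {p : ℝ × ℝ | p.2 ≤ p.1} :=
    measurableSet_le measurable_snd measurable_fst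
  have hgm : AEStronglyMeasurable g μt := hg.aestronglyMeasurable
  have hfm : AEStronglyMeasurable f (μt.prod μt) := by
    rw [hfind]
    exact (((continuous_const.mul ((Real.continuous_exp.comp
      (continuous_const.mul continuous_id)).comp continuous_fst)).aestronglyMeasurable).mul
      hgm.comp_snd).indicator hset
  have hprodmem : ∀ᵐ p ∂(μt.prod μt), p ∈ Set.Ioc (0:ℝ) t ×ˢ Set.Ioc (0:ℝ) t := by
    rw [hμt, Measure.prod_restrict]
    exact ae_restrict_mem (measurableSet_Ioc.prod measurableSet_Ioc)
  have hfi : Integrable f (μt.prod μt) := by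
    refine Integrable.mono'
      (g := fun p => (|c| * Real.exp (|c| * t)) * ‖g p.2‖)
      ((integrable_const (|c| * Real.exp (|c| * t))).mul_prod hg.norm) hfm ?_
    filter_upwards [hprodmem] with p hp
    rw [hfind]
    by_cases h : p.2 ≤ p.1
    · simp only [Set.indicator_apply, Set.mem_setOf_eq, if_pos h]
      rw [Real.norm_eq_abs, abs_mul, abs_mul, abs_of_pos (Real.exp_pos _)]
      have h1 : c * p.1 ≤ |c| * t := by
        calc c * p.1 ≤ |c * p.1| := le_abs_self _
        _ = |c| * p.1 := by rw [abs_mul, abs_of_pos hp.1.1]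
        _ ≤ |c| * t := mul_le_mul_of_nonneg_left hp.1.2 (abs_nonneg c)
      calc |c| * Real.exp (c * p.1) * |g p.2| ≤ |c| * Real.exp (|c| * t) * |g p.2| := by
            gcongr
        _ = |c| * Real.exp (|c| * t) * ‖g p.2‖ := rfl
    · simp only [Set.indicator_apply, Set.mem_setOf_eq, if_neg h, norm_zero]
      positivity
  have hswap : ∫ s, (∫ r, f (s, r) ∂μt) ∂μt = ∫ r, (∫ s, f (s, r) ∂μt) ∂μt :=
    integral_integral_swap hfi
  have claim1 : ∀ s ∈ Set.Ioc (0:ℝ) t,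
      (∫ r, f (s, r) ∂μt) = c * Real.exp (c*s) * ∫ r in (0:ℝ)..s, g r := by
    intro s hs
    have h1 : (fun r => f (s, r)) = (Set.Iic s).indicator (fun r => c * Real.exp (c*s) * g r) := by
      funext r; by_cases h : r ≤ s <;> simp [hf, Set.indicator, h]
    have hseteq : Set.Iic s ∩ Set.Ioc 0 t = Set.Ioc 0 s := by
      ext r
      simp only [Set.mem_inter_iff, Set.mem_Iic, Set.mem_Ioc]
      exact ⟨fun ⟨h1, h2, h3⟩ => ⟨h2, h1⟩, fun ⟨h1, h2⟩ => ⟨h2, h1, h2.trans hs.2⟩⟩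
    rw [h1, hμt, MeasureTheory.integral_indicator measurableSet_Iic,
      Measure.restrict_restrict measurableSet_Iic, hseteq,
      MeasureTheory.integral_const_mul, intervalIntegral.integral_of_le hs.1.le]
  have claim2 : ∀ r ∈ Set.Ioc (0:ℝ) t,
      (∫ s, f (s, r) ∂μt) = (Real.exp (c*t) - Real.exp (c*r)) * g r := by
    intro r hr
    have h1 : (fun s => f (s, r)) = (Set.Ici r).indicator (fun s => c * Real.exp (c*s) * g r) := by
      funext s; by_cases h : r ≤ s <;> simp [hf, Set.indicator, h]
    have hseteq : Set.Ici r ∩ Set.Ioc 0 t = Set.Icc r t := by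
      ext s
      simp only [Set.mem_inter_iff, Set.mem_Ici, Set.mem_Ioc, Set.mem_Icc]
      exact ⟨fun ⟨h1, h2, h3⟩ => ⟨h1, h3⟩, fun ⟨h1, h2⟩ => ⟨h1, hr.1.trans_le h1, h2⟩⟩
    rw [h1, hμt, MeasureTheory.integral_indicator measurableSet_Ici,
      Measure.restrict_restrict measurableSet_Ici, hseteq,
      integral_Icc_eq_integral_Ioc, ← intervalIntegral.integral_of_le hr.2,
      intervalIntegral.integral_mul_const, traj_exp_int]
  rw [intervalIntegral.integral_of_le ht, intervalIntegral.integral_of_le ht,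
    intervalIntegral.integral_of_le ht]
  calc ∫ s in Set.Ioc (0:ℝ) t, c * Real.exp (c*s) * ∫ r in (0:ℝ)..s, g r
      = ∫ s, (∫ r, f (s, r) ∂μt) ∂μt :=
        (setIntegral_congr_fun measurableSet_Ioc (fun s hs => (claim1 s hs).symm) : _)
    _ = ∫ r, (∫ s, f (s, r) ∂μt) ∂μt := hswap
    _ = ∫ r in Set.Ioc (0:ℝ) t, (Real.exp (c*t) - Real.exp (c*r)) * g r :=
        setIntegral_congr_fun measurableSet_Ioc (fun r hr => claim2 r hr)
    _ = Real.exp (c*t) * (∫ r in Set.Ioc (0:ℝ) t, g r)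
        - ∫ r in Set.Ioc (0:ℝ) t, Real.exp (c*r) * g r := by
        simp only [sub_mul]
        rw [integral_sub (hg.const_mul _) (traj_mul_int c t g hg),
          MeasureTheory.integral_const_mul]

lemma traj_nonneg (F : ℝ → ℝ) (hFanti : Antitone F) (hF0 : F 0 = 0)
    (x₀ : ℝ) (hx₀ : 0 ≤ x₀) (u : ℝ → ℝ)
    (hupos : ∀ᵐ t ∂(volume.restrict (Set.Ici (0:ℝ))), 0 ≤ u t)
    (x : ℝ → ℝ) (hxc : ContinuousOn x (Set.Ici 0))
    (hxeq : ∀ t : ℝ, 0 ≤ t → x t = x₀ + ∫ s in (0:ℝ)..t, (F (x s) + u s))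
    (hint : ∀ t : ℝ, 0 ≤ t → IntervalIntegrable (fun s => F (x s) + u s) volume 0 t) :
    ∀ t, 0 ≤ t → 0 ≤ x t := by
  intro t₀ ht₀
  by_contra hneg
  push_neg at hneg
  have hx0 : x 0 = x₀ := by simpa using hxeq 0 le_rfl
  set S := {s : ℝ | s ∈ Set.Icc 0 t₀ ∧ 0 ≤ x s} with hS
  have hS0 : (0:ℝ) ∈ S := ⟨⟨le_rfl, ht₀⟩, hx0 ▸ hx₀⟩
  have hSb : BddAbove S := ⟨t₀, fun s hs => hs.1.2⟩
  have hSclosed : IsClosed S := by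
    have h1 : S = Set.Icc 0 t₀ ∩ x ⁻¹' (Set.Ici 0) := by
      ext s; simp [hS, Set.mem_Icc, and_assoc]
    rw [h1]
    exact (hxc.mono (fun s hs => hs.1)).preimage_isClosed_of_isClosed isClosed_Icc isClosed_Ici
  set τ := sSup S with hτdef
  have hτS : τ ∈ S := hSclosed.csSup_mem ⟨0, hS0⟩ hSb
  have hτ0 : 0 ≤ τ := hτS.1.1
  have hττ : τ ≤ t₀ := hτS.1.2
  have hxτ : 0 ≤ x τ := hτS.2
  have hτlt : τ < t₀ := lt_of_le_of_ne hττ (fun h => absurd (h ▸ hxτ) (not_le.mpr hneg))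
  have hneg' : ∀ s ∈ Set.Ioc τ t₀, x s ≤ 0 := by
    intro s hs
    by_contra h
    push_neg at h
    have hsS : s ∈ S := ⟨⟨hτ0.trans hs.1.le, hs.2⟩, h.le⟩
    exact absurd (le_csSup hSb hsS) (not_le.mpr hs.1)
  have key : x t₀ - x τ = ∫ s in τ..t₀, (F (x s) + u s) := by
    rw [hxeq t₀ ht₀, hxeq τ hτ0, add_sub_add_left_eq_sub,
      intervalIntegral.integral_interval_sub_left (hint t₀ ht₀) (hint τ hτ0)]
  have hnn : 0 ≤ ∫ s in τ..t₀, (F (x s) + u s) := by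
    apply intervalIntegral.integral_nonneg_of_ae_restrict hττ
    have hrIoc : volume.restrict (Set.Icc τ t₀) = volume.restrict (Set.Ioc τ t₀) :=
      (Measure.restrict_congr_set MeasureTheory.Ioc_ae_eq_Icc).symm
    rw [hrIoc]
    have hu' : ∀ᵐ s ∂volume.restrict (Set.Ioc τ t₀), 0 ≤ u s :=
      ae_restrict_of_ae_restrict_of_subset (fun s hs => hτ0.trans hs.1.le) hupos
    filter_upwards [hu', ae_restrict_mem measurableSet_Ioc] with s hus hmem
    have hFs : F 0 ≤ F (x s) := hFanti (hneg' s hmem)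
    rw [hF0] at hFs
    simp only [Pi.zero_apply]
    linarith
  linarith [key ▸ hnn]

/-- Two-sided exponential bounds for the trajectory; in particular the
trajectory is nonnegative. -/
theorem trajectory_two_sided_bounds
    (b₀ b M : ℝ) (hb₀ : 0 < b₀) (hb : 0 < b) (hM : 0 < M)
    (F : ℝ → ℝ) (hF : ContDiff ℝ 1 F) (hF0 : F 0 = 0)
    (hF' : ∀ y : ℝ, -b₀ ≤ deriv F y ∧ deriv F y ≤ 0)
    (hFlin : ∀ y : ℝ, 0 ≤ y → F y ≤ -b * y + M)
    (x₀ : ℝ) (hx₀ : 0 ≤ x₀)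
    (u : ℝ → ℝ) (hu : Measurable u)
    (huloc : ∀ T : ℝ, 0 < T → IntegrableOn u (Set.Icc 0 T))
    (hupos : ∀ᵐ t ∂(volume.restrict (Set.Ici (0:ℝ))), 0 ≤ u t)
    (x : ℝ → ℝ)
    (hx : ContinuousOn x (Set.Ici 0) ∧
      ∀ t : ℝ, 0 ≤ t → x t = x₀ + ∫ s in (0:ℝ)..t, (F (x s) + u s)) :
    ∀ t : ℝ, 0 ≤ t →
      Real.exp (-b₀ * t) * (x₀ + ∫ s in (0:ℝ)..t, Real.exp (b₀ * s) * u s) ≤ x t ∧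
      x t ≤ Real.exp (-b * t) * (x₀ + ∫ s in (0:ℝ)..t, Real.exp (b * s) * (M + u s)) ∧
      0 ≤ x t := by
  obtain ⟨hxc, hxeq⟩ := hx
  have hFd : Differentiable ℝ F := hF.differentiable one_ne_zero
  have hFanti : Antitone F := antitone_of_deriv_nonpos hFd (fun y => (hF' y).2)
  have huIoc : ∀ t : ℝ, 0 ≤ t → IntegrableOn u (Set.Ioc 0 t) := by
    intro t ht
    rcases eq_or_lt_of_le ht with h | h
    · rw [← h]; simp
    · exact (huloc t h).mono_set Set.Ioc_subset_Icc_self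
  have hgIoc : ∀ t : ℝ, 0 ≤ t → IntegrableOn (fun s => F (x s) + u s) (Set.Ioc 0 t) := by
    intro t ht
    have hFxCont : ContinuousOn (fun s => F (x s)) (Set.Icc 0 t) :=
      hF.continuous.comp_continuousOn (hxc.mono Set.Icc_subset_Ici_self)
    exact ((hFxCont.integrableOn_Icc).mono_set Set.Ioc_subset_Icc_self).add (huIoc t ht)
  have hgii : ∀ t : ℝ, 0 ≤ t → IntervalIntegrable (fun s => F (x s) + u s) volume 0 t :=
    fun t ht => (intervalIntegrable_iff_integrableOn_Ioc_of_le ht).mpr (hgIoc t ht)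
  have hxnn : ∀ t : ℝ, 0 ≤ t → 0 ≤ x t :=
    traj_nonneg F hFanti hF0 x₀ hx₀ u hupos x hxc hxeq hgii
  have hIexpg : ∀ c t : ℝ, 0 ≤ t →
      IntervalIntegrable (fun s => Real.exp (c*s) * (F (x s) + u s)) volume 0 t :=
    fun c t ht => (intervalIntegrable_iff_integrableOn_Ioc_of_le ht).mpr
      (traj_mul_int c t _ (hgIoc t ht))
  have hIexpx : ∀ c t : ℝ, 0 ≤ t →
      IntervalIntegrable (fun s => Real.exp (c*s) * (c * x s)) volume 0 t := by
    intro c t ht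
    apply ContinuousOn.intervalIntegrable
    rw [Set.uIcc_of_le ht]
    exact ((Real.continuous_exp.comp (continuous_const.mul continuous_id)).continuousOn).mul
      (continuous_const.continuousOn.mul (hxc.mono Set.Icc_subset_Ici_self))
  have hkey : ∀ c t : ℝ, 0 ≤ t →
      Real.exp (c*t) * x t
        = x₀ + ∫ s in (0:ℝ)..t, Real.exp (c*s) * (c * x s + (F (x s) + u s)) := by
    intro c t ht
    have hstep1 : ∫ s in (0:ℝ)..t, c * Real.exp (c*s) * (∫ r in (0:ℝ)..s, (F (x r) + u r))
        = (∫ s in (0:ℝ)..t, Real.exp (c*s) * (c * x s)) - x₀ * (Real.exp (c*t) - 1) := by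
      have hcongr : Set.EqOn (fun s => c * Real.exp (c*s) * (∫ r in (0:ℝ)..s, (F (x r) + u r)))
          (fun s => Real.exp (c*s) * (c * x s) - x₀ * (c * Real.exp (c*s))) (Set.uIcc 0 t) := by
        intro s hs
        rw [Set.uIcc_of_le ht] at hs
        have h2 : (∫ r in (0:ℝ)..s, (F (x r) + u r)) = x s - x₀ := by rw [hxeq s hs.1]; ring
        simp only
        rw [h2]; ring
      rw [intervalIntegral.integral_congr hcongr,
        intervalIntegral.integral_sub (hIexpx c t ht)
          ((Continuous.intervalIntegrable (by continuity) _ _ :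
            IntervalIntegrable (fun s => x₀ * (c * Real.exp (c*s))) volume 0 t)),
        intervalIntegral.integral_const_mul, traj_exp_int]
      simp [Real.exp_zero]
    calc Real.exp (c*t) * x t
        = Real.exp (c*t) * x₀ + Real.exp (c*t) * ∫ s in (0:ℝ)..t, (F (x s) + u s) := by
          rw [hxeq t ht]; ring
      _ = Real.exp (c*t) * x₀
          + ((∫ s in (0:ℝ)..t, c * Real.exp (c*s) * (∫ r in (0:ℝ)..s, (F (x r) + u r)))
            + ∫ s in (0:ℝ)..t, Real.exp (c*s) * (F (x s) + u s)) := by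
          rw [traj_fubini c t ht _ (hgIoc t ht)]; ring
      _ = x₀ + ((∫ s in (0:ℝ)..t, Real.exp (c*s) * (c * x s))
            + ∫ s in (0:ℝ)..t, Real.exp (c*s) * (F (x s) + u s)) := by
          rw [hstep1]; ring
      _ = x₀ + ∫ s in (0:ℝ)..t,
            (Real.exp (c*s) * (c * x s) + Real.exp (c*s) * (F (x s) + u s)) := by
          rw [intervalIntegral.integral_add (hIexpx c t ht) (hIexpg c t ht)]
      _ = x₀ + ∫ s in (0:ℝ)..t, Real.exp (c*s) * (c * x s + (F (x s) + u s)) := by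
          simp only [mul_add]
  have hlow : ∀ y : ℝ, 0 ≤ y → 0 ≤ b₀ * y + F y := by
    have hmono : Monotone (fun y => b₀ * y + F y) := by
      apply monotone_of_deriv_nonneg ((differentiable_fun_id.const_mul b₀).add hFd)
      intro y
      have h1 : HasDerivAt (fun y : ℝ => b₀ * y) b₀ y := by
        simpa using (hasDerivAt_id y).const_mul b₀
      rw [(show HasDerivAt ((fun y => b₀ * y) + F) (b₀ + deriv F y) y from h1.add (hFd y).hasDerivAt).deriv]
      linarith [(hF' y).1]
    intro y hy
    have := hmono hy
    simp only [mul_zero, hF0, add_zero] at this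
    exact this
  intro t ht
  refine ⟨?_, ?_, hxnn t ht⟩
  · -- lower bound
    have hmono : (∫ s in (0:ℝ)..t, Real.exp (b₀*s) * u s)
        ≤ ∫ s in (0:ℝ)..t, Real.exp (b₀*s) * (b₀ * x s + (F (x s) + u s)) := by
      apply intervalIntegral.integral_mono_on ht
      · exact (intervalIntegrable_iff_integrableOn_Ioc_of_le ht).mpr
          (traj_mul_int b₀ t u (huIoc t ht))
      · have := (hIexpx b₀ t ht).add (hIexpg b₀ t ht)
        simpa [mul_add] using this
      · intro s hs
        have h0 : 0 ≤ b₀ * x s + F (x s) := hlow (x s) (hxnn s hs.1)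
        nlinarith [mul_nonneg (Real.exp_pos (b₀*s)).le h0]
    have hfinal : x₀ + (∫ s in (0:ℝ)..t, Real.exp (b₀*s) * u s) ≤ Real.exp (b₀*t) * x t := by
      rw [hkey b₀ t ht]; linarith
    calc Real.exp (-b₀*t) * (x₀ + ∫ s in (0:ℝ)..t, Real.exp (b₀*s) * u s)
        ≤ Real.exp (-b₀*t) * (Real.exp (b₀*t) * x t) :=
          mul_le_mul_of_nonneg_left hfinal (Real.exp_pos _).le
      _ = x t := by rw [← mul_assoc, ← Real.exp_add]; norm_num
  · -- upper bound
    have hmono : (∫ s in (0:ℝ)..t, Real.exp (b*s) * (b * x s + (F (x s) + u s)))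
        ≤ ∫ s in (0:ℝ)..t, Real.exp (b*s) * (M + u s) := by
      apply intervalIntegral.integral_mono_on ht
      · have := (hIexpx b t ht).add (hIexpg b t ht)
        simpa [mul_add] using this
      · refine (intervalIntegrable_iff_integrableOn_Ioc_of_le ht).mpr
          (traj_mul_int b t _ ?_)
        exact (integrableOn_const measure_Ioc_lt_top.ne).add (huIoc t ht)
      · intro s hs
        have h0 : F (x s) ≤ -b * x s + M := hFlin (x s) (hxnn s hs.1)
        nlinarith [mul_nonneg (Real.exp_pos (b*s)).le
          (by linarith : (0:ℝ) ≤ -b * x s + M - F (x s))]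
    have hfinal : Real.exp (b*t) * x t ≤ x₀ + ∫ s in (0:ℝ)..t, Real.exp (b*s) * (M + u s) := by
      rw [hkey b t ht]; linarith
    calc x t = Real.exp (-b*t) * (Real.exp (b*t) * x t) := by
          rw [← mul_assoc, ← Real.exp_add]; norm_num
      _ ≤ Real.exp (-b*t) * (x₀ + ∫ s in (0:ℝ)..t, Real.exp (b*s) * (M + u s)) :=
          mul_le_mul_of_nonneg_left hfinal (Real.exp_pos _).le
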